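/- Let V̂ be a positive semidefinite Hermitian n×n complex matrix and g ∈ ℂⁿ a vector with gᴴ V̂ g > 0. Define w★ = (gᴴ V̂ g)^{−1/2} · V̂ g and V★ = w★ (w★)ᴴ. Then V̂ − V★ is positive semidefinite, rank(V★) ≤ 1, and gᴴ V★ g = gᴴ V̂ g. -/

import Mathlib

open Matrix ComplexOrder

set_option maxHeartbeats 1000000 in
private lemma cs_psd {n : ℕ} {V : Matrix (Fin n) (Fin n) ℂ} (hV : V.PosSemidef)
    (x y : Fin n → ℂ) :
    ‖star x ⬝ᵥ (V *ᵥ y)‖ ^ 2 ≤ (star x ⬝ᵥ (V *ᵥ x)).re * (star y ⬝ᵥ (V *ᵥ y)).re := by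
  open scoped MatrixOrder in
  set B := CFC.sqrt V with hBdef
  have hB : B * B = V := by open scoped MatrixOrder in exact CFC.sqrt_mul_sqrt_self V hV.nonneg
  have hBh : Bᴴ = B := by open scoped MatrixOrder in exact (CFC.sqrt_nonneg V).posSemidef.1
  have key : ∀ u v : Fin n → ℂ, star u ⬝ᵥ (V *ᵥ v) = star (B *ᵥ u) ⬝ᵥ (B *ᵥ v) := by
    intro u v
    rw [star_mulVec, hBh, ← hB, ← mulVec_mulVec, dotProduct_mulVec]
  set X : EuclideanSpace ℂ (Fin n) := (WithLp.equiv 2 (Fin n → ℂ)).symm (B *ᵥ x) with hX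
  set Y : EuclideanSpace ℂ (Fin n) := (WithLp.equiv 2 (Fin n → ℂ)).symm (B *ᵥ y) with hY
  have h1 : star x ⬝ᵥ (V *ᵥ y) = (inner ℂ X Y : ℂ) := by
    rw [key]; exact dotProduct_comm _ _
  have h2 : star x ⬝ᵥ (V *ᵥ x) = (inner ℂ X X : ℂ) := by
    rw [key]; exact dotProduct_comm _ _
  have h3 : star y ⬝ᵥ (V *ᵥ y) = (inner ℂ Y Y : ℂ) := by
    rw [key]; exact dotProduct_comm _ _
  have hsym : ‖(inner ℂ Y X : ℂ)‖ = ‖(inner ℂ X Y : ℂ)‖ := (norm_inner_symm X Y).symm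
  have hmain := inner_mul_inner_self_le (𝕜 := ℂ) X Y
  rw [h1, h2, h3]
  calc ‖(inner ℂ X Y : ℂ)‖ ^ 2 = ‖(inner ℂ X Y : ℂ)‖ * ‖(inner ℂ Y X : ℂ)‖ := by
        rw [hsym, sq]
    _ ≤ (inner ℂ X X : ℂ).re * (inner ℂ Y Y : ℂ).re := hmain

theorem rank_one_construction {n : ℕ} (Vhat : Matrix (Fin n) (Fin n) ℂ)
    (hV : Vhat.PosSemidef) (g : Fin n → ℂ)
    (hq : 0 < (star g ⬝ᵥ (Vhat *ᵥ g)).re)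
    (w : Fin n → ℂ) (Vstar : Matrix (Fin n) (Fin n) ℂ)
    (hw : w = ((Real.sqrt ((star g ⬝ᵥ (Vhat *ᵥ g)).re) : ℂ))⁻¹ • (Vhat *ᵥ g))
    (hVs : Vstar = Matrix.vecMulVec w (star w)) :
    (Vhat - Vstar).PosSemidef ∧ Vstar.rank ≤ 1 ∧
      star g ⬝ᵥ (Vstar *ᵥ g) = star g ⬝ᵥ (Vhat *ᵥ g) := by
  set q : ℝ := (star g ⬝ᵥ (Vhat *ᵥ g)).re with hqdef
  have hq0 : 0 < q := hq
  have hs0 : 0 < Real.sqrt q := Real.sqrt_pos.2 hq0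
  have hs2 : Real.sqrt q * Real.sqrt q = q := Real.mul_self_sqrt hq0.le
  have hggnn : 0 ≤ star g ⬝ᵥ (Vhat *ᵥ g) := hV.dotProduct_mulVec_nonneg g
  have him : (star g ⬝ᵥ (Vhat *ᵥ g)).im = 0 := by
    rw [Complex.le_def] at hggnn
    simpa using hggnn.2.symm
  have hreal : star g ⬝ᵥ (Vhat *ᵥ g) = (q : ℂ) := by
    apply Complex.ext <;> simp [hqdef, him]
  have hmv : ∀ x : Fin n → ℂ, Vstar *ᵥ x = (star w ⬝ᵥ x) • w := by
    intro x
    subst hVs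
    ext i
    simp only [mulVec, dotProduct, vecMulVec_apply, Pi.smul_apply, smul_eq_mul,
      Finset.sum_mul]
    exact Finset.sum_congr rfl fun j _ => by ring
  have hstarw : ∀ x : Fin n → ℂ, star w ⬝ᵥ x = star (star x ⬝ᵥ w) := by
    intro x
    simp [dotProduct, mul_comm]
  have hquad : ∀ x : Fin n → ℂ,
      star x ⬝ᵥ (Vstar *ᵥ x) = star (star x ⬝ᵥ w) * (star x ⬝ᵥ w) := by
    intro x
    rw [hmv, dotProduct_smul, smul_eq_mul, hstarw]
  have hcval : ∀ x : Fin n → ℂ,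
      star x ⬝ᵥ w = ((Real.sqrt q : ℂ))⁻¹ * (star x ⬝ᵥ (Vhat *ᵥ g)) := by
    intro x
    rw [hw, dotProduct_smul, smul_eq_mul]
  refine ⟨.of_dotProduct_mulVec_nonneg (hV.1.sub ?_) ?_, ?_, ?_⟩
  · subst hVs
    ext i j
    simp [conjTranspose_apply, vecMulVec_apply, mul_comm]
  · intro x
    rw [sub_mulVec, dotProduct_sub, hquad]
    set c : ℂ := star x ⬝ᵥ w with hc
    set A : ℂ := star x ⬝ᵥ (Vhat *ᵥ x) with hA
    have hAnn : 0 ≤ A := hV.dotProduct_mulVec_nonneg x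
    have hAim : A.im = 0 := by
      rw [Complex.le_def] at hAnn; simpa using hAnn.2.symm
    have hAre : 0 ≤ A.re := by
      rw [Complex.le_def] at hAnn; simpa using hAnn.1
    have hAeq : A = (A.re : ℂ) := by apply Complex.ext <;> simp [hAim]
    have hcc : star c * c = ((‖c‖ ^ 2 : ℝ) : ℂ) := by
      rw [Complex.star_def, mul_comm, Complex.mul_conj, Complex.normSq_eq_norm_sq]
    have hnorm : ‖c‖ ^ 2 ≤ A.re := by
      have hcs := cs_psd hV x g
      rw [← hA, ← hqdef] at hcs
      have hceq : ‖c‖ ^ 2 = ‖star x ⬝ᵥ (Vhat *ᵥ g)‖ ^ 2 / q := by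
        rw [hc, hcval, norm_mul, mul_pow, norm_inv, Complex.norm_real,
          Real.norm_eq_abs, abs_of_pos hs0, inv_pow, sq, hs2]
        field_simp
      rw [hceq, div_le_iff₀ hq0]
      exact hcs
    rw [hcc, hAeq, ← Complex.ofReal_sub, Complex.zero_le_real]
    linarith
  · rw [hVs, vecMulVec_eq (Fin 1)]
    calc (replicateCol (Fin 1) w * replicateRow (Fin 1) (star w)).rank ≤ (replicateCol (Fin 1) w).rank :=
          rank_mul_le_left _ _
      _ ≤ Fintype.card (Fin 1) := rank_le_card_width _
      _ = 1 := by simp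
  · have hval : star g ⬝ᵥ w = (((Real.sqrt q)⁻¹ * q : ℝ) : ℂ) := by
      rw [hcval, hreal]
      push_cast
      ring
    have hr : ((Real.sqrt q)⁻¹ * q) * ((Real.sqrt q)⁻¹ * q) = q := by
      field_simp
      rw [Real.sq_sqrt hq0.le]
    rw [hquad, hval, Complex.star_def, Complex.conj_ofReal, ← Complex.ofReal_mul, hr, hreal]
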